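/- If f is a discrete Morse function on a finite tree T and S is a set of edges of T such that for every edge e = uv in S, both f(u) and f(v) are, among the critical values of f that are less than f(e) and lie in the respective components of u and v in the sublevel complex below f(e), realized only by the vertices u and v themselves, then no two distinct edges of S share a vertex; consequently the number of impasses of the induced merge tree is at most the matching number of T. -/

import Mathlib

/-- A merge tree: a full binary tree with left/right-designated children. -/
inductive MergeTree : Type
  | leaf : MergeTree
  | node : MergeTree → MergeTree → MergeTree
  deriving DecidableEq

/-- The number of impasses: internal nodes both of whose children are leaves. -/
def MergeTree.numImpasses : MergeTree → ℕ
  | .leaf => 0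
  | .node .leaf .leaf => 1
  | .node l r => l.numImpasses + r.numImpasses

/-- Number of leaves. -/
def MergeTree.numLeaves : MergeTree → ℕ
  | .leaf => 1
  | .node l r => l.numLeaves + r.numLeaves

section DMT

variable {V : Type} (G : SimpleGraph V) (fV : V → ℝ) (fE : Sym2 V → ℝ)

/-- A discrete Morse function on the graph `G`, given by its values `fV` on vertices and
`fE` on edges: it is weakly increasing, at most 2-to-1, and simplices sharing a value
must be incident (in particular it is injective on vertices and on edges). -/
def IsDMF : Prop :=
  (∀ v : V, ∀ e ∈ G.edgeSet, v ∈ e → fV v ≤ fE e) ∧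
  (∀ u v : V, fV u = fV v → u = v) ∧
  (∀ e ∈ G.edgeSet, ∀ e' ∈ G.edgeSet, fE e = fE e' → e = e') ∧
  (∀ v : V, ∀ e ∈ G.edgeSet, fV v = fE e → v ∈ e)

/-- `v` is a critical vertex: no incident edge shares its value. -/
def CritV (v : V) : Prop := ∀ e ∈ G.edgeSet, v ∈ e → fV v ≠ fE e

/-- `e` is a critical edge: it is an edge and no endpoint shares its value. -/
def CritE (e : Sym2 V) : Prop := e ∈ G.edgeSet ∧ ∀ v ∈ e, fV v ≠ fE e

/-- All simplices are critical (`f` is injective on all simplices): a critical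
discrete Morse function. -/
def AllCritical : Prop := ∀ v : V, ∀ e ∈ G.edgeSet, fV v ≠ fE e

/-- The sublevel subcomplex: the subgraph of `G` on the vertex set `S` with the edges of
value `< c`. -/
def sublevel (S : Set V) (c : ℝ) : SimpleGraph V where
  Adj a b := G.Adj a b ∧ a ∈ S ∧ b ∈ S ∧ fE s(a, b) < c
  symm := by
    constructor
    intro a b h
    exact ⟨h.1.symm, h.2.2.1, h.2.1, by rw [Sym2.eq_swap]; exact h.2.2.2⟩
  loopless := by constructor; intro a h; exact G.loopless.irrefl a h.1

/-- The connected component of the vertex `u` in the sublevel subcomplex of `(S, c)`. -/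
def compOf (S : Set V) (c : ℝ) (u : V) : Set V :=
  {w | (sublevel G fE S c).Reachable u w}

/-- `IsInduced G fV fE S c d t` says that `t` is the merge tree induced by the discrete
Morse function on the connected subcomplex with vertex set `S` and edges of value `< c`,
where `d` records the direction (L = `true`, R = `false`) assigned to the corresponding
node.  A component whose largest critical value is attained at a vertex yields a leaf;
otherwise the largest critical value is at a critical edge `s(u,v)`, whose node has the
two children induced on the components of `u` and `v` just below the edge's value, the
component containing the smaller minimum value inheriting the direction `d` and the
other receiving the opposite direction; the child with direction L is the left child. -/
inductive IsInduced : Set V → ℝ → Bool → MergeTree → Prop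
  | leaf (S : Set V) (c : ℝ) (d : Bool) (w : V) :
      w ∈ S → fV w < c → CritV G fV fE w →
      (∀ x ∈ S, fV x < c → CritV G fV fE x → fV x ≤ fV w) →
      (∀ e ∈ G.edgeSet, (∀ x ∈ e, x ∈ S) → fE e < c → CritE G fV fE e → fE e ≤ fV w) →
      IsInduced S c d .leaf
  | node (S : Set V) (c : ℝ) (d : Bool) (u v : V) (du : Bool) (tu tv : MergeTree) :
      G.Adj u v → u ∈ S → v ∈ S → fE s(u, v) < c → CritE G fV fE s(u, v) →
      (∀ x ∈ S, fV x < c → CritV G fV fE x → fV x ≤ fE s(u, v)) →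
      (∀ e ∈ G.edgeSet, (∀ x ∈ e, x ∈ S) → fE e < c → CritE G fV fE e →
        fE e ≤ fE s(u, v)) →
      IsInduced (compOf G fE S (fE s(u, v)) u) (fE s(u, v)) du tu →
      IsInduced (compOf G fE S (fE s(u, v)) v) (fE s(u, v)) (!du) tv →
      (du = d ↔ sInf (fV '' compOf G fE S (fE s(u, v)) u) <
        sInf (fV '' compOf G fE S (fE s(u, v)) v)) →
      IsInduced S c d (if du then .node tu tv else .node tv tu)

/-- `t` is the merge tree induced by the discrete Morse function `(fV, fE)` on `G`:
the construction applied to the whole complex, the root receiving direction L. -/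
def InducedBy (t : MergeTree) : Prop :=
  ∃ c : ℝ, (∀ v : V, fV v < c) ∧ (∀ e ∈ G.edgeSet, fE e < c) ∧
    IsInduced G fV fE Set.univ c true t

end DMT

/-- The star graph `S_n = K_{1,n-1}` on `n` vertices: vertex `0` is the center,
adjacent to all other vertices, and there are no other edges. -/
def starGraph (n : ℕ) : SimpleGraph (Fin n) :=
  SimpleGraph.fromRel (fun i _ => i.val = 0)

section Aux

open SimpleGraph

variable {V : Type} {G : SimpleGraph V} {fV : V → ℝ} {fE : Sym2 V → ℝ}

/-- vertices reachable in a sublevel graph from a vertex of `S` lie in `S`. -/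
lemma compOf_subset {S : Set V} {c : ℝ} {u : V} (hu : u ∈ S) :
    compOf G fE S c u ⊆ S := by
  intro w hw
  obtain ⟨p⟩ := hw
  induction p with
  | nil => exact hu
  | cons h p ih => exact ih h.2.2.1

lemma comp_disjoint (htree : G.IsTree) {S : Set V} {u v : V} (huv : G.Adj u v) :
    ∀ w, w ∈ compOf G fE S (fE s(u, v)) u → w ∈ compOf G fE S (fE s(u, v)) v → False := by
  intro w hwu hwv
  have hreach : (sublevel G fE S (fE s(u, v))).Reachable u v := hwu.trans hwv.symm
  have hmono : sublevel G fE S (fE s(u, v)) ≤ G \ SimpleGraph.fromEdgeSet {s(u, v)} := by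
    intro a b hab
    rw [SimpleGraph.sdiff_adj, SimpleGraph.fromEdgeSet_adj]
    refine ⟨hab.1, ?_⟩
    rintro ⟨hmem, -⟩
    rw [Set.mem_singleton_iff] at hmem
    have := hab.2.2.2
    rw [hmem] at this
    exact lt_irrefl _ this
  have hbridge := (SimpleGraph.isAcyclic_iff_forall_adj_isBridge.mp htree.2) huv
  rw [SimpleGraph.isBridge_iff] at hbridge
  exact hbridge (hreach.mono hmono)

lemma numImpasses_node {l r : MergeTree} (h : ¬(l = .leaf ∧ r = .leaf)) :
    (MergeTree.node l r).numImpasses = l.numImpasses + r.numImpasses := by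
  cases l with
  | leaf =>
    cases r with
    | leaf => exact absurd ⟨rfl, rfl⟩ h
    | node a b => rfl
  | node a b => cases r <;> rfl

lemma exists_matching_of_isInduced [Fintype V] (htree : G.IsTree)
    {S : Set V} {c : ℝ} {d : Bool} {t : MergeTree}
    (h : IsInduced G fV fE S c d t) :
    ∃ M : G.Subgraph, M.IsMatching ∧ M.verts ⊆ S ∧
      t.numImpasses ≤ M.edgeSet.ncard := by
  induction h with
  | leaf S c d w _ _ _ _ _ =>
    refine ⟨⊥, ?_, ?_, ?_⟩
    · intro v hv
      simp only [Subgraph.verts_bot, Set.mem_empty_iff_false] at hv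
    · simp
    · simp [MergeTree.numImpasses]
  | node S c d u v du tu tv hadj hu hv hlt hcrit hmaxV hmaxE hIu hIv hdir ihu ihv =>
    obtain ⟨Mu, hMu, hMuV, hMuI⟩ := ihu
    obtain ⟨Mv, hMv, hMvV, hMvI⟩ := ihv
    have hdisj := comp_disjoint (fE := fE) (S := S) htree hadj
    by_cases hleaf : tu = MergeTree.leaf ∧ tv = MergeTree.leaf
    · obtain ⟨rfl, rfl⟩ := hleaf
      refine ⟨G.subgraphOfAdj hadj, Subgraph.IsMatching.subgraphOfAdj hadj, ?_, ?_⟩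
      · simp only [subgraphOfAdj_verts]
        intro x hx
        rcases hx with rfl | rfl
        · exact hu
        · exact hv
      · rw [SimpleGraph.edgeSet_subgraphOfAdj, Set.ncard_singleton]
        cases du <;> simp [MergeTree.numImpasses]
    · have hsupp : Disjoint Mu.support Mv.support := by
        rw [Set.disjoint_left]
        intro x hxu hxv
        exact hdisj x (hMuV (Mu.support_subset_verts hxu))
          (hMvV (Mv.support_subset_verts hxv))
      refine ⟨Mu ⊔ Mv, hMu.sup hMv hsupp, ?_, ?_⟩
      · rw [Subgraph.verts_sup]
        intro x hx
        rcases hx with hx | hx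
        · exact compOf_subset hu (hMuV hx)
        · exact compOf_subset hv (hMvV hx)
      · have hedisj : Disjoint Mu.edgeSet Mv.edgeSet := by
          rw [Set.disjoint_left]
          intro e heu hev
          induction e with
          | _ a b =>
            rw [Subgraph.mem_edgeSet] at heu hev
            exact hdisj a (hMuV (Mu.edge_vert heu)) (hMvV (Mv.edge_vert hev))
        have hcard : (Mu ⊔ Mv).edgeSet.ncard = Mu.edgeSet.ncard + Mv.edgeSet.ncard := by
          rw [Subgraph.edgeSet_sup]
          exact Set.ncard_union_eq hedisj (Set.toFinite _) (Set.toFinite _)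
        have hsum : tu.numImpasses + tv.numImpasses ≤ (Mu ⊔ Mv).edgeSet.ncard := by
          rw [hcard]; exact Nat.add_le_add hMuI hMvI
        cases du
        · rw [if_neg (by simp), numImpasses_node (fun hc => hleaf ⟨hc.2, hc.1⟩)]
          omega
        · rw [if_pos rfl, numImpasses_node hleaf]
          exact hsum

end Aux


/-- Let `f` be a discrete Morse function on a finite tree `T` and `S` a set of edges
of `T` such that for every edge `e = s(u,v)` in `S`, among the critical simplices with
value less than `f e` lying in the respective components of `u` and `v` in the
sublevel complex below `f e`, the values `f u` and `f v` are realized only by the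
vertices `u` and `v` themselves (i.e. the only such critical simplices are `u` and
`v`).  Then no two distinct edges of `S` share a vertex; consequently the number of
impasses of the induced merge tree is at most the matching number of `T`. -/
theorem impasses_le_matching_number {V : Type} [Fintype V] (G : SimpleGraph V)
    (htree : G.IsTree) (fV : V → ℝ) (fE : Sym2 V → ℝ)
    (hf : IsDMF G fV fE)
    (S : Set (Sym2 V)) (hSE : S ⊆ G.edgeSet)
    (hS : ∀ u v : V, s(u, v) ∈ S →
      CritE G fV fE s(u, v) ∧
      (∀ w ∈ compOf G fE Set.univ (fE s(u, v)) u,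
        fV w < fE s(u, v) → CritV G fV fE w → w = u) ∧
      (∀ w ∈ compOf G fE Set.univ (fE s(u, v)) v,
        fV w < fE s(u, v) → CritV G fV fE w → w = v) ∧
      (∀ e' ∈ G.edgeSet, fE e' < fE s(u, v) → CritE G fV fE e' →
        ¬ (∀ x ∈ e', x ∈ compOf G fE Set.univ (fE s(u, v)) u)) ∧
      (∀ e' ∈ G.edgeSet, fE e' < fE s(u, v) → CritE G fV fE e' →
        ¬ (∀ x ∈ e', x ∈ compOf G fE Set.univ (fE s(u, v)) v))) :
    -- no two distinct edges of S share a vertex (S forms a matching of T)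
    (∀ e₁ ∈ S, ∀ e₂ ∈ S, e₁ ≠ e₂ → ∀ x : V, x ∈ e₁ → x ∉ e₂) ∧
    -- consequently, the number of impasses of the induced merge tree is at most ν(T)
    (∀ t : MergeTree, InducedBy G fV fE t →
      t.numImpasses ≤ sSup {k : ℕ | ∃ M : G.Subgraph,
        M.IsMatching ∧ M.edgeSet.ncard = k}) := by
  constructor
  · -- S is a matching
    have key : ∀ e₁ ∈ S, ∀ e₂ ∈ S, fE e₁ < fE e₂ → ∀ x : V, x ∈ e₁ → x ∈ e₂ → False := by
      intro e₁ he₁ e₂ he₂ hlt x hx1 hx2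
      obtain ⟨y, rfl⟩ : ∃ y, e₂ = s(x, y) := ⟨Sym2.Mem.other hx2, (Sym2.other_spec hx2).symm⟩
      obtain ⟨z, rfl⟩ : ∃ z, e₁ = s(x, z) := ⟨Sym2.Mem.other hx1, (Sym2.other_spec hx1).symm⟩
      have h2 := hS x y he₂
      have h1 := hS x z he₁
      have he1E : s(x, z) ∈ G.edgeSet := hSE he₁
      refine h2.2.2.2.1 s(x, z) he1E hlt h1.1 ?_
      intro w hw
      rw [Sym2.mem_iff] at hw
      rcases hw with rfl | rfl
      · exact SimpleGraph.Reachable.refl _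
      · exact SimpleGraph.Adj.reachable
          ⟨(G.mem_edgeSet).mp he1E, Set.mem_univ _, Set.mem_univ _, hlt⟩
    intro e₁ he₁ e₂ he₂ hne x hx1 hx2
    rcases lt_trichotomy (fE e₁) (fE e₂) with h | h | h
    · exact key e₁ he₁ e₂ he₂ h x hx1 hx2
    · exact hne (hf.2.2.1 e₁ (hSE he₁) e₂ (hSE he₂) h)
    · exact key e₂ he₂ e₁ he₁ h x hx2 hx1
  · -- impasses bound
    intro t ht
    obtain ⟨c, hcV, hcE, hind⟩ := ht
    obtain ⟨M, hM, -, hMI⟩ := exists_matching_of_isInduced htree hind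
    have hmem : M.edgeSet.ncard ∈
        {k : ℕ | ∃ M : G.Subgraph, M.IsMatching ∧ M.edgeSet.ncard = k} := ⟨M, hM, rfl⟩
    have hbdd : BddAbove {k : ℕ | ∃ M : G.Subgraph, M.IsMatching ∧ M.edgeSet.ncard = k} := by
      refine ⟨(Set.univ : Set (Sym2 V)).ncard, ?_⟩
      rintro k ⟨N, -, rfl⟩
      exact Set.ncard_le_ncard (Set.subset_univ _) Set.finite_univ
    exact le_trans hMI (le_csSup hbdd hmem)
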